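/- For all real numbers a > 0, κ > 0, A ≥ 0, b > 0 and z ∈ ℝ, one has A ≤ b(κ + e^z)A + (b(κ + e^z)/(4a))A² + (ab/(κ + e^z))·((1/b − κ − e^z)⁺)², where (r)⁺ := max(r, 0). -/
import Mathlib

/-- Inequality (5.1) of the paper: for all `a > 0`, `κ > 0`, `A ≥ 0`, `b > 0`, `z ∈ ℝ`,
`A ≤ b(κ + e^z)A + (b(κ + e^z)/(4a))A² + (ab/(κ + e^z))·((1/b − κ − e^z)⁺)²`. -/
theorem dads_basic_inequality (a κ A b z : ℝ)
    (ha : 0 < a) (hκ : 0 < κ) (hA : 0 ≤ A) (hb : 0 < b) :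
    A ≤ b * (κ + Real.exp z) * A + (b * (κ + Real.exp z) / (4 * a)) * A ^ 2 +
      (a * b / (κ + Real.exp z)) * (max (1 / b - κ - Real.exp z) 0) ^ 2 := by
  have hc : 0 < κ + Real.exp z := by positivity
  set c := κ + Real.exp z with hcdef
  rcases le_or_gt (1 / b - κ - Real.exp z) 0 with h | h
  · rw [max_eq_right h]
    have hbc : 1 ≤ b * c := by
      have h1 : 1 / b ≤ c := by rw [hcdef]; linarith
      rw [div_le_iff₀ hb] at h1; linarith
    have h1 : 0 ≤ (b * c - 1) * A := mul_nonneg (by linarith) hA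
    have h2 : 0 ≤ b * c / (4 * a) * A ^ 2 :=
      mul_nonneg (div_nonneg (mul_nonneg hb.le hc.le) (by linarith)) (sq_nonneg A)
    nlinarith [h1, h2]
  · rw [max_eq_left h.le]
    have key : A * b * (1 / b - c) ≤ (b * c / (4 * a)) * A ^ 2 + (a * b / c) * (1 / b - κ - Real.exp z) ^ 2 := by
      have h4a : 0 < 4 * a := by linarith
      have e1 : b * c / (4 * a) = (b * c) / (4 * a) := rfl
      have hsq := sq_nonneg (Real.sqrt (b * c / (4 * a)) * A - Real.sqrt (a * b / c) * (1 / b - c))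
      have s1 : Real.sqrt (b * c / (4 * a)) ^ 2 = b * c / (4 * a) := Real.sq_sqrt (by positivity)
      have s2 : Real.sqrt (a * b / c) ^ 2 = a * b / c := Real.sq_sqrt (by positivity)
      have sprod : Real.sqrt (b * c / (4 * a)) * Real.sqrt (a * b / c) = b / 2 := by
        rw [← Real.sqrt_mul (by positivity)]
        have : b * c / (4 * a) * (a * b / c) = (b / 2) ^ 2 := by
          field_simp; ring
        rw [this, Real.sqrt_sq (by positivity)]
      have hce : (1 : ℝ) / b - κ - Real.exp z = 1 / b - c := by rw [hcdef]; ring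
      rw [hce]
      have expand : (Real.sqrt (b * c / (4 * a)) * A - Real.sqrt (a * b / c) * (1 / b - c)) ^ 2
          = (Real.sqrt (b * c / (4 * a))) ^ 2 * A ^ 2
            - 2 * (Real.sqrt (b * c / (4 * a)) * Real.sqrt (a * b / c)) * (A * (1 / b - c))
            + (Real.sqrt (a * b / c)) ^ 2 * (1 / b - c) ^ 2 := by ring
      rw [expand, s1, s2, sprod] at hsq
      nlinarith [hsq]
    have hmul : A = A * b * c + A * b * (1 / b - c) := by field_simp; ring
    calc A = A * b * c + A * b * (1 / b - c) := hmul
    _ ≤ A * b * c + ((b * c / (4 * a)) * A ^ 2 + (a * b / c) * (1 / b - κ - Real.exp z) ^ 2) := by linarith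
    _ = b * c * A + b * c / (4 * a) * A ^ 2 + a * b / c * (1 / b - κ - Real.exp z) ^ 2 := by ring
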